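/- Let S be a primitive finite collection of substitutions on a finite alphabet A and ν a fully supported measure on S^ℕ. Then there exists a unique fully supported Borel probability measure μ_ν on A^ℕ with 𝕊_ν μ_ν = μ_ν, and for every Borel probability measure μ on A^ℕ, the iterates 𝕊_ν^n μ converge to μ_ν in the vague topology (cylinder-wise). -/

import Mathlib

open MeasureTheory Filter
open scoped Classical

def applySub {A S : Type*} (subst : S → A → List A) {N : ℕ}
    (s : Fin N → S) (b : Fin N → A) : List A :=
  (List.ofFn fun i => subst (s i) (b i)).flatten

def trunc {A : Type*} [Inhabited A] (N : ℕ) (w : List A) : Fin N → A :=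
  fun i => w.getD i.1 default

def chainT {A S : Type*} [Inhabited A] (subst : S → A → List A) {N : ℕ} :
    List (Fin N → S) → (Fin N → A) → (Fin N → A)
  | [], b => b
  | s :: rest, b => chainT subst rest (trunc N (applySub subst s b))

/-- Primitivity of a collection of substitutions. -/
def PrimitiveSub {A S : Type*} [Inhabited A] (subst : S → A → List A) : Prop :=
  ∀ N : ℕ, ∃ nN : ℕ, ∀ n ≥ nN, ∀ a b : Fin N → A,
    ∃ ss : List (Fin N → S), ss.length = n ∧ chainT subst ss b = a

def cyl (A : Type*) {N : ℕ} (a : Fin N → A) : Set (ℕ → A) :=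
  {x | ∀ i : Fin N, x i.1 = a i}

def cylS (S : Type*) {N : ℕ} (s : Fin N → S) : Set (ℕ → S) :=
  {x | ∀ i : Fin N, x i.1 = s i}

/-- The transition matrix M_N(a,b) = ∑_{s ∈ S^N : s(b) ⊒ a} ν[s]. -/
noncomputable def MN {A S : Type*} [Fintype A] [DecidableEq A] [Fintype S]
    [MeasurableSpace S] (subst : S → A → List A) (ν : Measure (ℕ → S)) (N : ℕ) :
    Matrix (Fin N → A) (Fin N → A) ℝ :=
  Matrix.of fun a b => ∑ s : Fin N → S,
    if List.ofFn a <+: applySub subst s b then (ν (cylS S s)).toReal else 0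

set_option linter.unusedSectionVars false
set_option maxHeartbeats 1000000
set_option linter.unusedVariables false
set_option linter.unnecessarySimpa false

section lists
variable {A S : Type*} [Inhabited A]

theorem length_applySub (subst : S → A → List A) (hne : ∀ σ a, subst σ a ≠ [])
    {N : ℕ} (s : Fin N → S) (b : Fin N → A) : N ≤ (applySub subst s b).length := by
  rw [applySub, List.length_flatten, List.map_ofFn]
  rw [List.sum_ofFn]
  calc N = ∑ _i : Fin N, 1 := by simp
  _ ≤ _ := Finset.sum_le_sum fun i _ => List.length_pos_iff.2 (hne _ _)

theorem prefix_iff_trunc {N : ℕ} {w : List A} (hw : N ≤ w.length) (a : Fin N → A) :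
    List.ofFn a <+: w ↔ a = trunc N w := by
  rw [List.prefix_iff_eq_take, List.length_ofFn]
  constructor
  · intro h
    funext i
    have := congrArg (fun l => l.getD i.1 default) h
    simp only [List.getD_eq_getElem _ _ (by simpa using i.2 : (i:ℕ) < (List.ofFn a).length)] at this
    rw [List.getElem_ofFn] at this
    rw [trunc, this]
    have hi : (i : ℕ) < (w.take N).length := by simp [Nat.lt_min.2 ⟨i.2, lt_of_lt_of_le i.2 hw⟩]
    rw [List.getD_eq_getElem _ _ hi, List.getD_eq_getElem _ _ (lt_of_lt_of_le i.2 hw)]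
    simp
  · rintro rfl
    apply List.ext_getElem
    · simp [Nat.min_eq_left hw]
    · intro n h1 h2
      simp only [List.getElem_ofFn]
      have hn : n < N := by simpa using h1
      rw [List.getElem_take]
      simp [trunc, List.getD_eq_getElem _ _ (lt_of_lt_of_le hn hw),
        List.getElem?_eq_getElem (lt_of_lt_of_le hn hw)]

theorem ofFn_prefix_trunc {N : ℕ} {w : List A} (hw : N ≤ w.length) :
    List.ofFn (trunc N w) <+: w := (prefix_iff_trunc hw _).2 rfl

theorem prefix_append_iff {N : ℕ} (a : Fin N → A) {w : List A} (t : List A)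
    (hw : N ≤ w.length) : List.ofFn a <+: w ++ t ↔ List.ofFn a <+: w := by
  constructor
  · intro h
    rw [List.prefix_iff_eq_take, List.length_ofFn] at h ⊢
    rwa [List.take_append_of_le_length hw] at h
  · intro h
    exact h.trans (List.prefix_append w t)

theorem ofFn_snoc' {N : ℕ} (a : Fin N → A) (c : A) :
    List.ofFn (Fin.snoc a c : Fin (N+1) → A) = List.ofFn a ++ [c] := by
  rw [List.ofFn_succ']
  simp [Fin.snoc_castSucc, List.concat_eq_append]

theorem applySub_snoc (subst : S → A → List A) {N : ℕ} (s : Fin N → S) (σ : S)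
    (b : Fin N → A) (c : A) :
    applySub subst (Fin.snoc s σ) (Fin.snoc b c) = applySub subst s b ++ subst σ c := by
  rw [applySub, applySub, List.ofFn_succ']
  simp only [Fin.snoc_castSucc, Fin.snoc_last, List.concat_eq_append, List.flatten_append]
  simp

theorem snoc_prefix_iff {N : ℕ} (a : Fin N → A) (c : A) {w : List A}
    (hw : N + 1 ≤ w.length) :
    List.ofFn (Fin.snoc a c : Fin (N+1) → A) <+: w ↔
      (List.ofFn a <+: w ∧ w.getD N default = c) := by
  rw [prefix_iff_trunc hw, prefix_iff_trunc (le_trans (Nat.le_succ N) hw)]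
  constructor
  · intro h
    constructor
    · funext i
      have := congrFun h i.castSucc
      simpa [trunc] using this
    · have := congrFun h (Fin.last N)
      simp only [trunc, Fin.snoc_last, Fin.val_last] at this
      exact this.symm
  · rintro ⟨h1, h2⟩
    funext i
    refine Fin.lastCases ?_ ?_ i
    · simp only [trunc, Fin.snoc_last, Fin.val_last]
      exact h2.symm
    · intro j
      have := congrFun h1 j
      simpa [trunc] using this
end lists

section cylinders
variable {X : Type*} [Fintype X] [MeasurableSpace X] [MeasurableSingletonClass X]

theorem measurableSet_cyl {N : ℕ} (a : Fin N → X) : MeasurableSet (cyl X a) := by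
  have : cyl X a = ⋂ i : Fin N, (fun x : ℕ → X => x i.1) ⁻¹' {a i} := by
    ext x; simp [cyl]
  rw [this]
  exact MeasurableSet.iInter fun i => (measurable_pi_apply _) (measurableSet_singleton _)

theorem cyl_disjoint {N : ℕ} {a b : Fin N → X} (h : a ≠ b) :
    Disjoint (cyl X a) (cyl X b) := by
  rw [Set.disjoint_left]
  intro x hxa hxb
  exact h (funext fun i => (hxa i).symm.trans (hxb i))

theorem iUnion_cyl (N : ℕ) : ⋃ a : Fin N → X, cyl X a = Set.univ := by
  ext x
  simp only [Set.mem_iUnion, Set.mem_univ, iff_true]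
  exact ⟨fun i => x i.1, fun i => rfl⟩

theorem sum_meas_cyl (μ : Measure (ℕ → X)) [IsProbabilityMeasure μ] (N : ℕ) :
    ∑ a : Fin N → X, μ (cyl X a) = 1 := by
  rw [← tsum_fintype (L := SummationFilter.unconditional _), ← measure_iUnion (fun a b hab => cyl_disjoint hab)
    (fun a => measurableSet_cyl a), iUnion_cyl, measure_univ]

theorem sum_meas_cyl_toReal (μ : Measure (ℕ → X)) [IsProbabilityMeasure μ] (N : ℕ) :
    ∑ a : Fin N → X, (μ (cyl X a)).toReal = 1 := by
  rw [← ENNReal.toReal_sum (fun a _ => measure_ne_top μ _), sum_meas_cyl, ENNReal.toReal_one]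

theorem cyl_eq_iUnion_snoc {N : ℕ} (a : Fin N → X) :
    cyl X a = ⋃ c : X, cyl X (Fin.snoc a c : Fin (N+1) → X) := by
  ext x
  simp only [Set.mem_iUnion]
  constructor
  · intro hx
    refine ⟨x N, fun i => ?_⟩
    refine Fin.lastCases ?_ ?_ i
    · simp
    · intro j; simpa using hx j
  · rintro ⟨c, hc⟩ i
    have := hc i.castSucc
    simpa using this

theorem meas_cyl_snoc (μ : Measure (ℕ → X)) [IsProbabilityMeasure μ] {N : ℕ}
    (a : Fin N → X) :
    μ (cyl X a) = ∑ c : X, μ (cyl X (Fin.snoc a c : Fin (N+1) → X)) := by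
  rw [cyl_eq_iUnion_snoc, measure_iUnion, tsum_fintype]
  · intro c c' hcc'
    apply cyl_disjoint
    intro h
    exact hcc' (by simpa using congrFun h (Fin.last N))
  · exact fun c => measurableSet_cyl _

theorem meas_cyl_snoc_toReal (μ : Measure (ℕ → X)) [IsProbabilityMeasure μ] {N : ℕ}
    (a : Fin N → X) :
    (μ (cyl X a)).toReal = ∑ c : X, (μ (cyl X (Fin.snoc a c : Fin (N+1) → X))).toReal := by
  rw [← ENNReal.toReal_sum (fun c _ => measure_ne_top μ _), ← meas_cyl_snoc]

theorem meas_cyl_zero (μ : Measure (ℕ → X)) [IsProbabilityMeasure μ] (a : Fin 0 → X) :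
    μ (cyl X a) = 1 := by
  have : cyl X a = Set.univ := by ext x; simp [cyl]
  rw [this, measure_univ]
end cylinders

section perron
variable {ι : Type*} [Fintype ι] [DecidableEq ι] [Nonempty ι]

/-- column-stochastic matrices -/
def ColStoch (Q : Matrix ι ι ℝ) : Prop :=
  (∀ a b, 0 ≤ Q a b) ∧ (∀ b, ∑ a, Q a b = 1)

theorem ColStoch.mul {Q Q' : Matrix ι ι ℝ} (h : ColStoch Q) (h' : ColStoch Q') :
    ColStoch (Q * Q') := by
  constructor
  · intro a b
    rw [Matrix.mul_apply]
    exact Finset.sum_nonneg fun c _ => mul_nonneg (h.1 a c) (h'.1 c b)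
  · intro b
    simp only [Matrix.mul_apply]
    rw [Finset.sum_comm]
    calc ∑ c, ∑ a, Q a c * Q' c b = ∑ c, (∑ a, Q a c) * Q' c b := by
          simp [Finset.sum_mul]
    _ = ∑ c, Q' c b := by simp [h.2]
    _ = 1 := h'.2 b

theorem ColStoch.pow {Q : Matrix ι ι ℝ} (h : ColStoch Q) (n : ℕ) : ColStoch (Q ^ n) := by
  induction n with
  | zero =>
    constructor
    · intro a b
      by_cases hab : a = b <;> simp [Matrix.one_apply, hab]
    · intro b
      simp [Matrix.one_apply]
  | succ n ih => rw [pow_succ]; exact ih.mul h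

/-- l1 norm of a vector -/
noncomputable def l1 (u : ι → ℝ) : ℝ := ∑ a, |u a|

theorem l1_nonneg (u : ι → ℝ) : 0 ≤ l1 u := Finset.sum_nonneg fun a _ => abs_nonneg _

theorem abs_le_l1 (u : ι → ℝ) (a : ι) : |u a| ≤ l1 u :=
  Finset.single_le_sum (fun b _ => abs_nonneg (u b)) (Finset.mem_univ a)

theorem l1_eq_zero {u : ι → ℝ} (h : l1 u ≤ 0) : u = 0 := by
  funext a
  have := abs_le_l1 u a
  have : |u a| ≤ 0 := le_trans this h
  simpa [abs_nonpos_iff] using this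

theorem sum_mulVec {Q : Matrix ι ι ℝ} (h : ColStoch Q) (u : ι → ℝ) :
    ∑ a, Q.mulVec u a = ∑ b, u b := by
  simp only [Matrix.mulVec, dotProduct]
  rw [Finset.sum_comm]
  calc ∑ b, ∑ a, Q a b * u b = ∑ b, (∑ a, Q a b) * u b := by simp [Finset.sum_mul]
  _ = _ := by simp [h.2]

theorem mulVec_nonneg {Q : Matrix ι ι ℝ} (h : ColStoch Q) {u : ι → ℝ}
    (hu : ∀ b, 0 ≤ u b) (a : ι) : 0 ≤ Q.mulVec u a :=
  Finset.sum_nonneg fun b _ => mul_nonneg (h.1 a b) (hu b)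

theorem l1_contract {Q : Matrix ι ι ℝ} (h : ColStoch Q) {δ : ℝ} (hδ0 : 0 ≤ δ)
    (hδ : ∀ a b, δ ≤ Q a b) {u : ι → ℝ} (hu : ∑ b, u b = 0) :
    l1 (Q.mulVec u) ≤ (1 - (Fintype.card ι : ℝ) * δ) * l1 u := by
  have key : ∀ a, Q.mulVec u a = ∑ b, (Q a b - δ) * u b := by
    intro a
    simp only [Matrix.mulVec, dotProduct, sub_mul]
    rw [Finset.sum_sub_distrib, ← Finset.mul_sum, hu, mul_zero, sub_zero]
  calc l1 (Q.mulVec u) ≤ ∑ a, ∑ b, (Q a b - δ) * |u b| := by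
        apply Finset.sum_le_sum
        intro a _
        rw [key a]
        refine le_trans (Finset.abs_sum_le_sum_abs _ _) (Finset.sum_le_sum fun b _ => ?_)
        rw [abs_mul, abs_of_nonneg (by linarith [hδ a b])]
  _ = ∑ b, (1 - (Fintype.card ι : ℝ) * δ) * |u b| := by
        rw [Finset.sum_comm]
        apply Finset.sum_congr rfl
        intro b _
        rw [← Finset.sum_mul, Finset.sum_sub_distrib, h.2 b, Finset.sum_const]
        simp [nsmul_eq_mul]
  _ = _ := by rw [← Finset.mul_sum]; rfl

theorem l1_mulVec_le {Q : Matrix ι ι ℝ} (h : ColStoch Q) (u : ι → ℝ) :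
    l1 (Q.mulVec u) ≤ l1 u := by
  calc l1 (Q.mulVec u) ≤ ∑ a, ∑ b, Q a b * |u b| := by
        apply Finset.sum_le_sum
        intro a _
        refine le_trans (Finset.abs_sum_le_sum_abs _ _) (Finset.sum_le_sum fun b _ => ?_)
        rw [abs_mul, abs_of_nonneg (h.1 a b)]
  _ = ∑ b, (∑ a, Q a b) * |u b| := by rw [Finset.sum_comm]; simp [Finset.sum_mul]
  _ = l1 u := by simp [h.2]; rfl

end perron

section perron2
variable {ι : Type*} [Fintype ι] [DecidableEq ι] [Nonempty ι]

theorem stoch_perron (Q : Matrix ι ι ℝ) (hQ : ColStoch Q) (n0 : ℕ) (hn0 : 1 ≤ n0)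
    (hpos : ∀ a b, 0 < (Q ^ n0) a b) :
    ∃ π : ι → ℝ, (∀ a, 0 < π a) ∧ (∑ a, π a = 1) ∧ Q.mulVec π = π ∧
      (∀ u : ι → ℝ, (∀ b, 0 ≤ u b) → ∑ b, u b = 1 → Q.mulVec u = u → u = π) ∧
      (∀ v : ι → ℝ, (∀ b, 0 ≤ v b) → ∑ b, v b = 1 →
        ∀ a, Tendsto (fun n => (Q ^ n).mulVec v a) atTop (nhds (π a))) := by
  classical
  set Q0 := Q ^ n0 with hQ0def
  have hQ0 : ColStoch Q0 := hQ.pow n0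
  obtain ⟨δ, hδpos, hδle⟩ : ∃ δ : ℝ, 0 < δ ∧ ∀ a b, δ ≤ Q0 a b := by
    refine ⟨Finset.univ.inf' (Finset.univ_nonempty) (fun p : ι × ι => Q0 p.1 p.2), ?_, ?_⟩
    · rw [Finset.lt_inf'_iff]
      exact fun p _ => hpos p.1 p.2
    · exact fun a b => Finset.inf'_le _ (Finset.mem_univ (a, b))
  set K := (Fintype.card ι : ℝ) with hK
  have hKpos : 0 < K := by
    simp only [hK, Nat.cast_pos]
    exact Fintype.card_pos
  set θ := 1 - K * δ with hθ
  have hθ0 : 0 ≤ θ := by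
    have b0 : ι := Classical.arbitrary ι
    have h1 : K * δ = ∑ _a : ι, δ := by simp [hK, mul_comm]
    have h2 : ∑ _a : ι, δ ≤ ∑ a, Q0 a b0 := Finset.sum_le_sum fun a _ => hδle a b0
    rw [hQ0.2 b0] at h2
    simp only [hθ]
    linarith [h1 ▸ h2]
  have hθ1 : θ < 1 := by
    have : 0 < K * δ := mul_pos hKpos hδpos
    simp only [hθ]; linarith
  have contract : ∀ u : ι → ℝ, ∑ b, u b = 0 → l1 (Q0.mulVec u) ≤ θ * l1 u :=
    fun u hu => l1_contract hQ0 (le_of_lt hδpos) hδle hu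
  have hzs : ∀ (R : Matrix ι ι ℝ), ColStoch R → ∀ u : ι → ℝ, ∑ b, u b = 0 →
      ∑ a, R.mulVec u a = 0 := fun R hR u hu => by rw [sum_mulVec hR, hu]
  have hiter : ∀ k, ∀ u : ι → ℝ, ∑ b, u b = 0 → l1 ((Q0 ^ k).mulVec u) ≤ θ ^ k * l1 u := by
    intro k
    induction k with
    | zero => intro u hu; simp [Matrix.one_mulVec]
    | succ k ih =>
      intro u hu
      rw [pow_succ, ← Matrix.mulVec_mulVec]
      calc l1 ((Q0 ^ k).mulVec (Q0.mulVec u)) ≤ θ ^ k * l1 (Q0.mulVec u) :=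
            ih _ (hzs Q0 hQ0 u hu)
      _ ≤ θ ^ k * (θ * l1 u) :=
            mul_le_mul_of_nonneg_left (contract u hu) (pow_nonneg hθ0 k)
      _ = θ ^ (k+1) * l1 u := by ring
  -- the approximating sequence
  set e : ι → ℝ := fun _ => K⁻¹ with he
  have he0 : ∀ b, 0 ≤ e b := fun b => inv_nonneg.2 (le_of_lt hKpos)
  have he1 : ∑ b, e b = 1 := by
    simp [he, ← hK]
  set w : ℕ → ι → ℝ := fun k => (Q0 ^ k).mulVec e with hw
  have hwprob : ∀ k, (∀ b, 0 ≤ w k b) ∧ ∑ b, w k b = 1 := by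
    intro k
    exact ⟨mulVec_nonneg (hQ0.pow k) he0, by rw [hw]; rw [sum_mulVec (hQ0.pow k) e, he1]⟩
  set d : ι → ℝ := Q0.mulVec e - e with hd
  have hdsum : ∑ b, d b = 0 := by
    simp only [hd, Pi.sub_apply, Finset.sum_sub_distrib]
    rw [sum_mulVec hQ0 e, he1, sub_self]
  have hwsucc : ∀ k, w (k+1) = w k + (Q0 ^ k).mulVec d := by
    intro k
    funext a
    simp only [hw, hd, Pi.add_apply, Matrix.mulVec_sub, Pi.sub_apply]
    rw [pow_succ, ← Matrix.mulVec_mulVec]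
    ring
  have hcauchy : ∀ a, ∃ L, Tendsto (fun k => w k a) atTop (nhds L) := by
    intro a
    apply cauchySeq_tendsto_of_complete
    apply cauchySeq_of_le_geometric θ (l1 d) hθ1
    intro k
    have hck : w k a - w (k+1) a = -((Q0 ^ k).mulVec d a) := by rw [hwsucc k]; simp
    rw [Real.dist_eq, hck, abs_neg]
    calc |(Q0 ^ k).mulVec d a| ≤ l1 ((Q0 ^ k).mulVec d) := abs_le_l1 _ a
    _ ≤ θ ^ k * l1 d := hiter k d hdsum
    _ = l1 d * θ ^ k := by ring
  choose π hπ using hcauchy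
  have hπ0 : ∀ a, 0 ≤ π a := fun a => ge_of_tendsto' (hπ a) (fun k => (hwprob k).1 a)
  have hπsum : ∑ a, π a = 1 := by
    have h1 : Tendsto (fun k => ∑ a, w k a) atTop (nhds (∑ a, π a)) :=
      tendsto_finset_sum _ (fun a _ => hπ a)
    have h2 : (fun k => ∑ a, w k a) = fun _ => (1:ℝ) := funext fun k => (hwprob k).2
    rw [h2] at h1
    exact (tendsto_nhds_unique tendsto_const_nhds h1).symm
  -- π is a fixed point of Q0
  have hmulVec_tendsto : ∀ (R : Matrix ι ι ℝ) (a : ι),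
      Tendsto (fun k => R.mulVec (w k) a) atTop (nhds (R.mulVec π a)) := by
    intro R a
    simp only [Matrix.mulVec, dotProduct]
    exact tendsto_finset_sum _ (fun b _ => (hπ b).const_mul (R a b))
  have hfix0 : Q0.mulVec π = π := by
    funext a
    have h1 : ∀ k, Q0.mulVec (w k) = w (k+1) := by
      intro k
      simp only [hw]
      rw [Matrix.mulVec_mulVec, ← pow_succ']
    have h2 : Tendsto (fun k => Q0.mulVec (w k) a) atTop (nhds (π a)) := by
      simp only [h1]
      exact (hπ a).comp (tendsto_add_atTop_nat 1)
    exact tendsto_nhds_unique (hmulVec_tendsto Q0 a) h2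
  -- uniqueness of fixed probability vectors for Q0
  have huniq0 : ∀ u : ι → ℝ, ∑ b, u b = 1 → Q0.mulVec u = u → u = π := by
    intro u hu1 hufix
    have hzsum : ∑ b, (u - π) b = 0 := by
      simp only [Pi.sub_apply, Finset.sum_sub_distrib, hu1, hπsum, sub_self]
    have h1 : l1 (Q0.mulVec (u - π)) ≤ θ * l1 (u - π) := contract _ hzsum
    rw [Matrix.mulVec_sub, hufix, hfix0] at h1
    have h2 : l1 (u - π) ≤ 0 := by nlinarith [l1_nonneg (u - π)]
    have := l1_eq_zero h2
    exact sub_eq_zero.1 this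
  -- π is a fixed point of Q
  have hfixQ : Q.mulVec π = π := by
    have hprob : ∑ b, Q.mulVec π b = 1 := by rw [sum_mulVec hQ, hπsum]
    refine huniq0 _ hprob ?_
    rw [Matrix.mulVec_mulVec, hQ0def, ← pow_succ, pow_succ', ← Matrix.mulVec_mulVec,
      ← hQ0def, hfix0]
  have hfixQn : ∀ n, (Q ^ n).mulVec π = π := by
    intro n
    induction n with
    | zero => simp [Matrix.one_mulVec]
    | succ n ih => rw [pow_succ, ← Matrix.mulVec_mulVec, hfixQ, ih]
  have hπpos : ∀ a, 0 < π a := by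
    intro a
    have h1 : π a = ∑ b, Q0 a b * π b := by
      conv_lhs => rw [← hfix0]
      rfl
    have h2 : ∑ b, δ * π b ≤ ∑ b, Q0 a b * π b :=
      Finset.sum_le_sum fun b _ => mul_le_mul_of_nonneg_right (hδle a b) (hπ0 b)
    have h3 : ∑ b, δ * π b = δ := by rw [← Finset.mul_sum, hπsum, mul_one]
    rw [h1]
    calc (0:ℝ) < δ := hδpos
    _ = ∑ b, δ * π b := h3.symm
    _ ≤ _ := h2
  refine ⟨π, hπpos, hπsum, hfixQ, ?_, ?_⟩
  · -- uniqueness among Q-fixed probability vectors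
    intro u _ hu1 hufix
    refine huniq0 u hu1 ?_
    have : ∀ n, (Q ^ n).mulVec u = u := by
      intro n
      induction n with
      | zero => simp [Matrix.one_mulVec]
      | succ n ih => rw [pow_succ, ← Matrix.mulVec_mulVec, hufix, ih]
    exact this n0
  · -- convergence
    intro v hv0 hv1 a
    have hvz : ∑ b, (v - π) b = 0 := by
      simp only [Pi.sub_apply, Finset.sum_sub_distrib, hv1, hπsum, sub_self]
    have hbound : ∀ n, |(Q ^ n).mulVec v a - π a| ≤ θ ^ (n / n0) * l1 (v - π) := by
      intro n
      have hsplit : Q ^ n = Q0 ^ (n / n0) * Q ^ (n % n0) := by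
        rw [hQ0def, ← pow_mul, ← pow_add]
        congr 1
        exact (Nat.div_add_mod n n0).symm ▸ rfl
      have h1 : (Q ^ n).mulVec v a - π a = (Q ^ n).mulVec (v - π) a := by
        rw [Matrix.mulVec_sub, hfixQn n]
        rfl
      rw [h1]
      calc |(Q ^ n).mulVec (v - π) a| ≤ l1 ((Q ^ n).mulVec (v - π)) := abs_le_l1 _ a
      _ = l1 ((Q0 ^ (n / n0)).mulVec ((Q ^ (n % n0)).mulVec (v - π))) := by
            rw [Matrix.mulVec_mulVec, ← hsplit]
      _ ≤ θ ^ (n / n0) * l1 ((Q ^ (n % n0)).mulVec (v - π)) :=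
            hiter _ _ (hzs _ (hQ.pow _) _ hvz)
      _ ≤ θ ^ (n / n0) * l1 (v - π) :=
            mul_le_mul_of_nonneg_left (l1_mulVec_le (hQ.pow _) _) (pow_nonneg hθ0 _)
    have hdiv : Tendsto (fun n : ℕ => n / n0) atTop atTop := by
      apply tendsto_atTop_atTop.2
      intro b
      refine ⟨b * n0, fun n hn => ?_⟩
      exact (Nat.le_div_iff_mul_le (by omega)).2 hn
    have hg : Tendsto (fun n : ℕ => θ ^ (n / n0) * l1 (v - π)) atTop (nhds 0) := by
      have := ((tendsto_pow_atTop_nhds_zero_of_lt_one hθ0 hθ1).comp hdiv).mul_const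
        (l1 (v - π))
      simpa using this
    have h0 : Tendsto (fun n => (Q ^ n).mulVec v a - π a) atTop (nhds 0) :=
      squeeze_zero_norm hbound hg
    have := h0.add (tendsto_const_nhds (x := π a))
    simpa using this

end perron2

section tile
variable {ι : Type*} [Fintype ι]

/-- offset of block `i` when blocks of length `g j` are laid out in order of `r`. -/
noncomputable def offR (r : ι → ℕ) (g : ι → ℝ) (i : ι) : ℝ :=
  ∑ j ∈ Finset.univ.filter (fun j => r j < r i), g j

variable {r : ι → ℕ} {g : ι → ℝ}

theorem offR_nonneg (hg : ∀ i, 0 ≤ g i) (i : ι) : 0 ≤ offR r g i :=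
  Finset.sum_nonneg fun j _ => hg j

theorem offR_add_le (hg : ∀ i, 0 ≤ g i) (i : ι) : offR r g i + g i ≤ ∑ j, g j := by
  rw [offR, add_comm, ← Finset.sum_insert (by simp)]
  exact Finset.sum_le_sum_of_subset_of_nonneg (Finset.subset_univ _) fun j _ _ => hg j

theorem offR_mono (hg : ∀ i, 0 ≤ g i) {i j : ι} (hij : r i < r j) :
    offR r g i + g i ≤ offR r g j := by
  rw [offR, add_comm, ← Finset.sum_insert (by simp)]
  apply Finset.sum_le_sum_of_subset_of_nonneg ?_ fun k _ _ => hg k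
  intro k hk
  simp only [Finset.mem_insert, Finset.mem_filter, Finset.mem_univ, true_and] at hk ⊢
  rcases hk with rfl | hk
  · exact hij
  · exact lt_trans hk hij

theorem offR_exists (hr : Function.Injective r) (hg : ∀ i, 0 ≤ g i) {x : ℝ}
    (hx0 : 0 ≤ x) (hx1 : x < ∑ j, g j) :
    ∃ i, offR r g i ≤ x ∧ x < offR r g i + g i := by
  have hne : Nonempty ι := by
    by_contra h
    rw [not_nonempty_iff] at h
    rw [Finset.sum_of_isEmpty] at hx1
    linarith
  -- the set of i with offR ≤ x is nonempty
  obtain ⟨i0, -, hi0⟩ := Finset.exists_min_image Finset.univ r ⟨Classical.arbitrary ι, Finset.mem_univ _⟩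
  have hoff0 : offR r g i0 = 0 := by
    rw [offR]
    apply Finset.sum_eq_zero
    intro j hj
    simp only [Finset.mem_filter] at hj
    exact absurd (hi0 j (Finset.mem_univ j)) (not_le.2 hj.2)
  set T := Finset.univ.filter (fun i => offR r g i ≤ x) with hT
  have hTne : T.Nonempty := ⟨i0, by simp [hT, hoff0, hx0]⟩
  obtain ⟨i, hiT, hmax⟩ := Finset.exists_max_image T r hTne
  simp only [hT, Finset.mem_filter, Finset.mem_univ, true_and] at hiT
  refine ⟨i, hiT, ?_⟩
  by_contra hcon
  push_neg at hcon
  by_cases hbig : ∃ j, r i < r j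
  · obtain ⟨j, hjmem, hjmin⟩ := Finset.exists_min_image (Finset.univ.filter fun j => r i < r j) r
      (by obtain ⟨j, hj⟩ := hbig; exact ⟨j, by simp [hj]⟩)
    simp only [Finset.mem_filter, Finset.mem_univ, true_and] at hjmem
    have hset : Finset.univ.filter (fun k => r k < r j) =
        insert i (Finset.univ.filter fun k => r k < r i) := by
      ext k
      simp only [Finset.mem_filter, Finset.mem_univ, true_and, Finset.mem_insert]
      constructor
      · intro hk
        rcases lt_trichotomy (r k) (r i) with h | h | h
        · exact Or.inr h
        · exact Or.inl (hr h)
        · exact absurd (hjmin k (by simp [h])) (not_le.2 hk)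
      · rintro (rfl | hk)
        · exact hjmem
        · exact lt_trans hk hjmem
    have hoffj : offR r g j = offR r g i + g i := by
      rw [offR, hset, Finset.sum_insert (by simp), offR]
      ring
    have hjT : j ∈ T := by simp [hT, hoffj]; linarith
    have := hmax j hjT
    exact absurd hjmem (not_lt.2 this)
  · -- no bigger element: offR i + g i = total
    push_neg at hbig
    have : Finset.univ.filter (fun j => r j < r i) = Finset.univ.erase i := by
      ext k
      simp only [Finset.mem_filter, Finset.mem_univ, true_and, Finset.mem_erase, and_true]
      constructor
      · intro hk
        exact fun h => absurd (h ▸ hk) (lt_irrefl _)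
      · intro hk
        exact lt_of_le_of_ne (hbig k) (fun h => hk (hr h))
    have h2 : offR r g i + g i = ∑ j, g j := by
      rw [offR, this, add_comm, ← Finset.sum_insert (Finset.notMem_erase i _),
        Finset.insert_erase (Finset.mem_univ i)]
    linarith

theorem offR_disjoint (hr : Function.Injective r) (hg : ∀ i, 0 ≤ g i) {i j : ι}
    (hij : i ≠ j) {x : ℝ} (hi : offR r g i ≤ x ∧ x < offR r g i + g i)
    (hj : offR r g j ≤ x ∧ x < offR r g j + g j) : False := by
  rcases lt_trichotomy (r i) (r j) with h | h | h
  · have := offR_mono hg h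
    linarith [hi.2, hj.1]
  · exact hij (hr h)
  · have := offR_mono hg h
    linarith [hj.2, hi.1]

end tile

section construct
variable {A : Type*} [Fintype A] [DecidableEq A] [Inhabited A] [Nonempty A]

/-- extend-by-one-letter equivalence -/
def snocEquiv (A : Type*) (N : ℕ) : ((Fin N → A) × A) ≃ (Fin (N+1) → A) where
  toFun p := Fin.snoc p.1 p.2
  invFun w := (Fin.init w, w (Fin.last N))
  left_inv p := by simp
  right_inv w := by simp

noncomputable def rA (A : Type*) [Fintype A] : A → ℕ := fun a => (Fintype.equivFin A a : ℕ)

theorem rA_inj (A : Type*) [Fintype A] : Function.Injective (rA A) := by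
  intro a b h
  exact (Fintype.equivFin A).injective (Fin.val_injective h)

noncomputable def Lfun (p : ∀ N : ℕ, (Fin N → A) → ℝ) : ∀ N : ℕ, (Fin N → A) → ℝ
  | 0, _ => 0
  | (N+1), w => Lfun p N (Fin.init w) +
      offR (rA A) (fun c => p (N+1) (Fin.snoc (Fin.init w) c)) (w (Fin.last N))

variable [MeasurableSpace A] [MeasurableSingletonClass A]

theorem measure_of_consistent (p : ∀ N : ℕ, (Fin N → A) → ℝ)
    (hnn : ∀ N a, 0 ≤ p N a) (hp0 : ∀ a : Fin 0 → A, p 0 a = 1)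
    (hcons : ∀ (N : ℕ) (a : Fin N → A), p N a = ∑ c, p (N+1) (Fin.snoc a c)) :
    ∃ μ : Measure (ℕ → A), IsProbabilityMeasure μ ∧
      ∀ (N : ℕ) (a : Fin N → A), μ (cyl A a) = ENNReal.ofReal (p N a) := by
  classical
  set L := Lfun p with hL
  set I : ∀ N : ℕ, (Fin N → A) → Set ℝ := fun N w => Set.Ico (L N w) (L N w + p N w) with hI
  -- nesting of intervals
  have hg_eq : ∀ (N : ℕ) (w : Fin (N+1) → A),
      p (N+1) w = (fun c => p (N+1) (Fin.snoc (Fin.init w) c)) (w (Fin.last N)) := by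
    intro N w
    simp [Fin.snoc_init_self]
  have hnest : ∀ (N : ℕ) (w : Fin (N+1) → A), I (N+1) w ⊆ I N (Fin.init w) := by
    intro N w
    have hLw : L (N+1) w = L N (Fin.init w) +
        offR (rA A) (fun c => p (N+1) (Fin.snoc (Fin.init w) c)) (w (Fin.last N)) := rfl
    have h1 : L N (Fin.init w) ≤ L (N+1) w := by
      rw [hLw]
      linarith [offR_nonneg (r := rA A)
        (fun c => hnn (N+1) (Fin.snoc (Fin.init w) c)) (w (Fin.last N))]
    have h2 : L (N+1) w + p (N+1) w ≤ L N (Fin.init w) + p N (Fin.init w) := by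
      rw [hLw, hcons N (Fin.init w), hg_eq N w]
      have := offR_add_le (r := rA A)
        (fun c => hnn (N+1) (Fin.snoc (Fin.init w) c)) (w (Fin.last N))
      linarith
    intro x hx
    simp only [hI, Set.mem_Ico] at hx ⊢
    exact ⟨le_trans h1 hx.1, lt_of_lt_of_le hx.2 h2⟩
  -- the tiling property, by induction
  have htile : ∀ N : ℕ, (∀ w, I N w ⊆ Set.Ico (0:ℝ) 1) ∧
      (∀ x ∈ Set.Ico (0:ℝ) 1, ∃ w, x ∈ I N w) ∧
      (∀ w w' : Fin N → A, w ≠ w' → ∀ x, x ∈ I N w → x ∈ I N w' → False) := by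
    intro N
    induction N with
    | zero =>
      refine ⟨fun w => ?_, fun x hx => ⟨fun i => i.elim0, ?_⟩, fun w w' hww' => ?_⟩
      · intro x hx
        simp only [hI, hL, Lfun, Set.mem_Ico, hp0] at hx
        simpa using hx
      · simp only [hI, hL, Lfun, Set.mem_Ico, hp0]
        simpa using hx
      · exact absurd (funext fun i => i.elim0) hww'
    | succ N ih =>
      refine ⟨fun w => (hnest N w).trans (ih.1 _), ?_, ?_⟩
      · intro x hx
        obtain ⟨a, ha⟩ := ih.2.1 x hx
        simp only [hI, Set.mem_Ico] at ha
        obtain ⟨c, hc1, hc2⟩ := offR_exists (rA_inj A)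
          (fun c => hnn (N+1) (Fin.snoc a c)) (x := x - L N a)
          (by linarith [ha.1]) (by rw [← hcons N a]; linarith [ha.2])
        refine ⟨Fin.snoc a c, ?_⟩
        have hLw : L (N+1) (Fin.snoc a c) = L N a +
            offR (rA A) (fun c' => p (N+1) (Fin.snoc a c')) c := by
          show Lfun p (N+1) (Fin.snoc a c) = _
          rw [Lfun]
          simp [Fin.init_snoc]
          rfl
        simp only [hI, Set.mem_Ico, hLw]
        constructor
        · linarith
        · linarith
      · intro w w' hww' x hxw hxw'
        by_cases hinit : Fin.init w = Fin.init w'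
        · have hlast : w (Fin.last N) ≠ w' (Fin.last N) := by
            intro h
            apply hww'
            rw [← Fin.snoc_init_self w, ← Fin.snoc_init_self w', hinit, h]
          set a := Fin.init w with ha
          have hxw2 := hxw
          have hxw'2 := hxw'
          simp only [hI, Set.mem_Ico] at hxw2 hxw'2
          have hLw : L (N+1) w = L N a +
              offR (rA A) (fun c => p (N+1) (Fin.snoc a c)) (w (Fin.last N)) := rfl
          have hLw' : L (N+1) w' = L N a +
              offR (rA A) (fun c => p (N+1) (Fin.snoc a c)) (w' (Fin.last N)) := by
            have : L (N+1) w' = L N (Fin.init w') +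
                offR (rA A) (fun c => p (N+1) (Fin.snoc (Fin.init w') c)) (w' (Fin.last N)) := rfl
            rw [this, ← hinit]
          apply offR_disjoint (rA_inj A) (fun c => hnn (N+1) (Fin.snoc a c)) hlast
            (x := x - L N a)
          · constructor
            · rw [hLw] at hxw2; linarith [hxw2.1]
            · rw [hLw] at hxw2
              have := hg_eq N w
              rw [← ha] at this
              rw [this] at hxw2
              linarith [hxw2.2]
          · constructor
            · rw [hLw'] at hxw'2; linarith [hxw'2.1]
            · rw [hLw'] at hxw'2
              have h2 := hg_eq N w'
              rw [← hinit] at h2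
              rw [h2] at hxw'2
              linarith [hxw'2.2]
        · exact ih.2.2 _ _ hinit x (hnest N w hxw) (hnest N w' hxw')
  -- the address map
  set W : ℝ → ∀ N : ℕ, Fin N → A := fun x N =>
    if h : ∃ w : Fin N → A, x ∈ I N w then h.choose else default with hWdef
  have hWuniq : ∀ (x : ℝ) (N : ℕ) (w : Fin N → A), x ∈ I N w → W x N = w := by
    intro x N w hw
    have hex : ∃ w' : Fin N → A, x ∈ I N w' := ⟨w, hw⟩
    have : W x N = hex.choose := by simp [hWdef, dif_pos hex]
    rw [this]
    by_contra hne
    exact (htile N).2.2 _ _ hne x hex.choose_spec hw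
  have hWmem : ∀ (x : ℝ), x ∈ Set.Ico (0:ℝ) 1 → ∀ N, x ∈ I N (W x N) := by
    intro x hx N
    obtain ⟨w, hw⟩ := (htile N).2.1 x hx
    rw [hWuniq x N w hw]
    exact hw
  have hWinit : ∀ (x : ℝ), x ∈ Set.Ico (0:ℝ) 1 → ∀ N,
      Fin.init (W x (N+1)) = W x N := by
    intro x hx N
    exact (hWuniq x N _ (hnest N _ (hWmem x hx (N+1)))).symm
  set f : ℝ → ℕ → A := fun x n => W x (n+1) (Fin.last n) with hfdef
  have hcoord : ∀ (x : ℝ), x ∈ Set.Ico (0:ℝ) 1 → ∀ (N : ℕ) (i : Fin N),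
      W x N i = f x i.1 := by
    intro x hx N
    induction N with
    | zero => exact fun i => i.elim0
    | succ N ihN =>
      intro i
      refine Fin.lastCases ?_ ?_ i
      · rfl
      · intro j
        have h1 : W x (N+1) j.castSucc = Fin.init (W x (N+1)) j := rfl
        rw [h1, hWinit x hx N, ihN j]
        rfl
  have hxcyl : ∀ (x : ℝ), x ∈ Set.Ico (0:ℝ) 1 → ∀ (N : ℕ) (w : Fin N → A),
      (f x ∈ cyl A w ↔ x ∈ I N w) := by
    intro x hx N w
    constructor
    · intro h
      have : W x N = w := funext fun i => (hcoord x hx N i).trans (h i)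
      rw [← this]
      exact hWmem x hx N
    · intro h
      intro i
      rw [← hcoord x hx N i, hWuniq x N w h]
  -- measurability of f
  have hImeas : ∀ (N : ℕ) (w : Fin N → A), MeasurableSet (I N w) := fun N w =>
    measurableSet_Ico
  have hfnodata : ∀ (x : ℝ), x ∉ Set.Ico (0:ℝ) 1 → ∀ n, f x n = default := by
    intro x hx n
    have : ¬ ∃ w : Fin (n+1) → A, x ∈ I (n+1) w := by
      rintro ⟨w, hw⟩
      exact hx ((htile (n+1)).1 w hw)
    simp only [hfdef, hWdef, dif_neg this]
    rfl
  have hfmeas : Measurable f := by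
    apply measurable_pi_lambda
    intro n
    apply measurable_to_countable
    intro y
    set a := f y n with ha
    have hset : (fun x => f x n) ⁻¹' {a} =
        (⋃ (w : Fin (n+1) → A) (_ : w (Fin.last n) = a), I (n+1) w) ∪
          (if a = (default : A) then (Set.Ico (0:ℝ) 1)ᶜ else ∅) := by
      ext x
      simp only [Set.mem_preimage, Set.mem_singleton_iff, Set.mem_union, Set.mem_iUnion]
      constructor
      · intro hfx
        by_cases hx : x ∈ Set.Ico (0:ℝ) 1
        · exact Or.inl ⟨W x (n+1), hfx, hWmem x hx (n+1)⟩
        · right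
          rw [← hfx, hfnodata x hx n, if_pos rfl]
          exact Set.mem_compl hx
      · rintro (⟨w, hw, hxw⟩ | hx)
        · show W x (n+1) (Fin.last n) = a
          rw [hWuniq x (n+1) w hxw, hw]
        · by_cases hd : a = (default : A)
          · rw [if_pos hd] at hx
            rw [hfnodata x hx n, hd]
          · rw [if_neg hd] at hx
            exact absurd hx (Set.notMem_empty x)
    rw [hset]
    apply MeasurableSet.union
    · exact MeasurableSet.iUnion fun w => MeasurableSet.iUnion fun _ => hImeas (n+1) w
    · split
      · exact measurableSet_Ico.compl
      · exact MeasurableSet.empty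
  -- the measure
  refine ⟨Measure.map f (volume.restrict (Set.Ico (0:ℝ) 1)), ?_, ?_⟩
  · constructor
    rw [Measure.map_apply hfmeas MeasurableSet.univ, Set.preimage_univ,
      Measure.restrict_apply MeasurableSet.univ, Set.univ_inter, Real.volume_Ico]
    simp
  · intro N w
    have hcylm : MeasurableSet (cyl A w) := by
      have : cyl A w = ⋂ i : Fin N, (fun x : ℕ → A => x i.1) ⁻¹' {w i} := by
        ext x; simp [cyl]
      rw [this]
      exact MeasurableSet.iInter fun i => (measurable_pi_apply _) (measurableSet_singleton _)
    rw [Measure.map_apply hfmeas hcylm, Measure.restrict_apply (hfmeas hcylm)]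
    have hseteq : f ⁻¹' (cyl A w) ∩ Set.Ico (0:ℝ) 1 = I N w := by
      ext x
      simp only [Set.mem_inter_iff, Set.mem_preimage]
      constructor
      · rintro ⟨h1, h2⟩
        exact (hxcyl x h2 N w).1 h1
      · intro h
        have hx := (htile N).1 w h
        exact ⟨(hxcyl x hx N w).2 h, hx⟩
    rw [hseteq]
    show volume (Set.Ico (L N w) (L N w + p N w)) = _
    rw [Real.volume_Ico]
    congr 1
    ring

end construct
section five
variable {A S : Type*} [Fintype A] [DecidableEq A] [Inhabited A] [Nonempty A]
    [MeasurableSpace A] [MeasurableSingletonClass A]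
    [Fintype S] [DecidableEq S] [Nonempty S] [MeasurableSpace S]
    [MeasurableSingletonClass S]

theorem cylS_eq_cyl {N : ℕ} (s : Fin N → S) : cylS S s = cyl S s := rfl

theorem ext_of_cyl (μ μ' : Measure (ℕ → A)) [IsProbabilityMeasure μ]
    [IsProbabilityMeasure μ']
    (h : ∀ (N : ℕ) (a : Fin N → A), μ (cyl A a) = μ' (cyl A a)) : μ = μ' := by
  classical
  set C : Set (Set (ℕ → A)) := {t | ∃ (N : ℕ) (a : Fin N → A), t = cyl A a} with hC
  have hgen : (inferInstance : MeasurableSpace (ℕ → A)) = MeasurableSpace.generateFrom C := by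
    apply le_antisymm
    · have hev1 : ∀ (n : ℕ) (a : A),
          MeasurableSet[MeasurableSpace.generateFrom C] ((fun x : ℕ → A => x n) ⁻¹' {a}) := by
        intro n a
        have hseteq : (fun x : ℕ → A => x n) ⁻¹' {a} =
            ⋃ (w : Fin (n+1) → A) (_ : w (Fin.last n) = a), cyl A w := by
          ext x
          simp only [Set.mem_preimage, Set.mem_singleton_iff, Set.mem_iUnion]
          constructor
          · intro hx
            exact ⟨fun i => x i.1, hx, fun i => rfl⟩
          · rintro ⟨w, hw, hxw⟩
            have := hxw (Fin.last n)
            simpa [hw] using this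
        rw [hseteq]
        exact MeasurableSet.iUnion fun w => MeasurableSet.iUnion fun _ =>
          MeasurableSpace.measurableSet_generateFrom ⟨n+1, w, rfl⟩
      have hev : ∀ n : ℕ,
          @Measurable (ℕ → A) A (MeasurableSpace.generateFrom C) _ (fun x => x n) := by
        intro n t _
        have hsplit : (fun x : ℕ → A => x n) ⁻¹' t =
            ⋃ (a : A) (_ : a ∈ t), (fun x : ℕ → A => x n) ⁻¹' {a} := by
          ext x
          simp
        rw [hsplit]
        exact MeasurableSet.iUnion fun a => MeasurableSet.iUnion fun _ => hev1 n a
      exact iSup_le fun n => measurable_iff_comap_le.1 (hev n)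
    · apply MeasurableSpace.generateFrom_le
      rintro t ⟨N, a, rfl⟩
      exact measurableSet_cyl a
  have key : ∀ (N M : ℕ) (a : Fin N → A) (b : Fin M → A), N ≤ M →
      (cyl A a ∩ cyl A b).Nonempty → cyl A a ∩ cyl A b = cyl A b := by
    intro N M a b hNM hne
    obtain ⟨x, hxa, hxb⟩ := hne
    apply Set.inter_eq_right.2
    intro y hy i
    have h1 : y i.1 = b ⟨i.1, lt_of_lt_of_le i.2 hNM⟩ := hy ⟨i.1, lt_of_lt_of_le i.2 hNM⟩
    have h2 : x i.1 = b ⟨i.1, lt_of_lt_of_le i.2 hNM⟩ := hxb ⟨i.1, lt_of_lt_of_le i.2 hNM⟩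
    exact h1.trans (h2.symm.trans (hxa i))
  have hpi : IsPiSystem C := by
    rintro s ⟨N, a, rfl⟩ t ⟨M, b, rfl⟩ hst
    rcases le_total N M with hNM | hMN
    · rw [key N M a b hNM hst]
      exact ⟨M, b, rfl⟩
    · rw [Set.inter_comm] at hst ⊢
      rw [key M N b a hMN hst]
      exact ⟨N, a, rfl⟩
  apply MeasureTheory.ext_of_generate_finite C hgen hpi
  · rintro t ⟨N, a, rfl⟩
    exact h N a
  · rw [measure_univ, measure_univ]

variable (subst : S → A → List A)

theorem MN_colStoch (hne : ∀ σ a, subst σ a ≠ []) (ν : Measure (ℕ → S))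
    [IsProbabilityMeasure ν] (N : ℕ) : ColStoch (MN (A := A) subst ν N) := by
  constructor
  · intro a b
    apply Finset.sum_nonneg
    intro s _
    split
    · exact ENNReal.toReal_nonneg
    · exact le_refl 0
  · intro b
    show ∑ a : Fin N → A, ∑ s : Fin N → S,
        (if List.ofFn a <+: applySub subst s b then (ν (cylS S s)).toReal else 0) = 1
    rw [Finset.sum_comm]
    have hinner : ∀ s : Fin N → S, ∑ a : Fin N → A,
        (if List.ofFn a <+: applySub subst s b then (ν (cylS S s)).toReal else 0) =
          (ν (cylS S s)).toReal := by
      intro s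
      have hlen := length_applySub subst hne s b
      calc ∑ a : Fin N → A,
          (if List.ofFn a <+: applySub subst s b then (ν (cylS S s)).toReal else 0)
          = ∑ a : Fin N → A, (if a = trunc N (applySub subst s b)
              then (ν (cylS S s)).toReal else 0) :=
            Finset.sum_congr rfl fun a _ => if_congr (prefix_iff_trunc hlen a) rfl rfl
      _ = (ν (cylS S s)).toReal := by
            rw [Finset.sum_ite_eq' Finset.univ]
            simp
    rw [Finset.sum_congr rfl fun s _ => hinner s]
    exact sum_meas_cyl_toReal ν N

theorem MN_chain_pos (hne : ∀ σ a, subst σ a ≠ []) (ν : Measure (ℕ → S))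
    [IsProbabilityMeasure ν] (hfs : ∀ (N : ℕ) (s : Fin N → S), 0 < ν (cylS S s)) {N : ℕ} :
    ∀ (ss : List (Fin N → S)) (b : Fin N → A),
      0 < ((MN subst ν N) ^ ss.length) (chainT subst ss b) b := by
  intro ss
  induction ss with
  | nil =>
    intro b
    simp [chainT, Matrix.one_apply]
  | cons s rest ih =>
    intro b
    have hlen := length_applySub subst hne s b
    set c := trunc N (applySub subst s b) with hc
    have hMcb : 0 < MN subst ν N c b := by
      have hterm : 0 < (if List.ofFn c <+: applySub subst s b
          then (ν (cylS S s)).toReal else 0) := by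
        rw [if_pos (ofFn_prefix_trunc hlen)]
        exact ENNReal.toReal_pos (hfs N s).ne' (measure_ne_top ν _)
      refine lt_of_lt_of_le hterm (Finset.single_le_sum (f := fun s' =>
        if List.ofFn c <+: applySub subst s' b then (ν (cylS S s')).toReal else 0)
        (fun s' _ => ?_) (Finset.mem_univ s))
      split
      · exact ENNReal.toReal_nonneg
      · exact le_refl 0
    have hgoal : chainT subst (s :: rest) b = chainT subst rest c := rfl
    rw [hgoal, List.length_cons, pow_succ]
    rw [Matrix.mul_apply]
    have hnn : ∀ c' : Fin N → A,
        0 ≤ ((MN subst ν N) ^ rest.length) (chainT subst rest c) c' * MN subst ν N c' b :=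
      fun c' => mul_nonneg (((MN_colStoch subst hne ν N).pow _).1 _ _)
        ((MN_colStoch subst hne ν N).1 _ _)
    have hterm : 0 < ((MN subst ν N) ^ rest.length) (chainT subst rest c) c *
        MN subst ν N c b := mul_pos (ih c) hMcb
    exact lt_of_lt_of_le hterm (Finset.single_le_sum (fun c' _ => hnn c') (Finset.mem_univ c))

theorem mulVec_MN (ν : Measure (ℕ → S)) (N : ℕ) (u : (Fin N → A) → ℝ) (a : Fin N → A) :
    (MN subst ν N).mulVec u a = ∑ s : Fin N → S, ∑ b : Fin N → A,
      (if List.ofFn a <+: applySub subst s b then (ν (cylS S s)).toReal * u b else 0) := by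
  calc (MN subst ν N).mulVec u a
      = ∑ b : Fin N → A, (∑ s : Fin N → S,
          if List.ofFn a <+: applySub subst s b then (ν (cylS S s)).toReal else 0) * u b := rfl
  _ = ∑ b : Fin N → A, ∑ s : Fin N → S,
        (if List.ofFn a <+: applySub subst s b then (ν (cylS S s)).toReal * u b else 0) := by
      apply Finset.sum_congr rfl
      intro b _
      rw [Finset.sum_mul]
      apply Finset.sum_congr rfl
      intro s _
      rw [ite_mul, zero_mul]
  _ = _ := Finset.sum_comm

theorem MN_intertwine (hne : ∀ σ a, subst σ a ≠ []) (ν : Measure (ℕ → S))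
    [IsProbabilityMeasure ν] (N : ℕ) (v : (Fin (N+1) → A) → ℝ) (a : Fin N → A) :
    ∑ c : A, (MN subst ν (N+1)).mulVec v (Fin.snoc a c) =
      (MN subst ν N).mulVec (fun b => ∑ c : A, v (Fin.snoc b c)) a := by
  classical
  -- key scalar identity
  have key : ∀ (b : Fin N → A) (cb : A),
      ∑ c : A, MN subst ν (N+1) (Fin.snoc a c) (Fin.snoc b cb) = MN subst ν N a b := by
    intro b cb
    have hMN' : ∀ c, MN subst ν (N+1) (Fin.snoc a c) (Fin.snoc b cb) =
        ∑ s' : Fin (N+1) → S, (if List.ofFn (Fin.snoc a c : Fin (N+1) → A) <+: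
          applySub subst s' (Fin.snoc b cb) then (ν (cylS S s')).toReal else 0) := fun c => rfl
    simp only [hMN']
    rw [Finset.sum_comm]
    -- reindex s' by snoc
    rw [← (snocEquiv S N).sum_comp fun s' : Fin (N+1) → S => ∑ c : A,
      (if List.ofFn (Fin.snoc a c : Fin (N+1) → A) <+: applySub subst s' (Fin.snoc b cb)
        then (ν (cylS S s')).toReal else 0)]
    rw [Fintype.sum_prod_type]
    apply Finset.sum_congr rfl
    intro s _
    have hlen : N ≤ (applySub subst s b).length := length_applySub subst hne s b
    have hstep : ∀ σ : S, ∑ c : A,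
        (if List.ofFn (Fin.snoc a c : Fin (N+1) → A) <+:
            applySub subst (snocEquiv S N (s, σ)) (Fin.snoc b cb)
          then (ν (cylS S (snocEquiv S N (s, σ)))).toReal else 0) =
        (if List.ofFn a <+: applySub subst s b
          then (ν (cylS S (Fin.snoc s σ : Fin (N+1) → S))).toReal else 0) := by
      intro σ
      have hsnoceq : snocEquiv S N (s, σ) = (Fin.snoc s σ : Fin (N+1) → S) := rfl
      rw [hsnoceq]
      have happ : applySub subst (Fin.snoc s σ) (Fin.snoc b cb) =
          applySub subst s b ++ subst σ cb := applySub_snoc subst s σ b cb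
      rw [happ]
      have hlen2 : N + 1 ≤ (applySub subst s b ++ subst σ cb).length := by
        rw [List.length_append]
        have := List.length_pos_iff.2 (hne σ cb)
        omega
      have hcond : ∀ c : A, (List.ofFn (Fin.snoc a c : Fin (N+1) → A) <+:
          applySub subst s b ++ subst σ cb) ↔
          ((List.ofFn a <+: applySub subst s b) ∧
            (applySub subst s b ++ subst σ cb).getD N default = c) := by
        intro c
        rw [snoc_prefix_iff a c hlen2, prefix_append_iff a _ hlen]
      calc ∑ c : A, (if List.ofFn (Fin.snoc a c : Fin (N+1) → A) <+:
            applySub subst s b ++ subst σ cb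
          then (ν (cylS S (Fin.snoc s σ : Fin (N+1) → S))).toReal else 0)
          = ∑ c : A, (if ((List.ofFn a <+: applySub subst s b) ∧
              (applySub subst s b ++ subst σ cb).getD N default = c)
            then (ν (cylS S (Fin.snoc s σ : Fin (N+1) → S))).toReal else 0) :=
          Finset.sum_congr rfl fun c _ => if_congr (hcond c) rfl rfl
      _ = _ := by
          by_cases hP : List.ofFn a <+: applySub subst s b
          · simp [hP]
          · simp [hP]
    rw [Finset.sum_congr rfl fun σ _ => hstep σ]
    by_cases hP : List.ofFn a <+: applySub subst s b
    · simp only [if_pos hP]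
      exact (meas_cyl_snoc_toReal ν s).symm
    · simp [hP]
  -- now the main computation
  have hexp : ∀ c : A, (MN subst ν (N+1)).mulVec v (Fin.snoc a c) =
      ∑ w' : Fin (N+1) → A, MN subst ν (N+1) (Fin.snoc a c) w' * v w' := fun c => rfl
  simp only [hexp]
  rw [Finset.sum_comm]
  calc ∑ w' : Fin (N+1) → A, ∑ c : A, MN subst ν (N+1) (Fin.snoc a c) w' * v w'
      = ∑ w' : Fin (N+1) → A, (∑ c : A, MN subst ν (N+1) (Fin.snoc a c) w') * v w' := by
        apply Finset.sum_congr rfl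
        intro w' _
        rw [Finset.sum_mul]
  _ = ∑ p : (Fin N → A) × A, (∑ c : A,
        MN subst ν (N+1) (Fin.snoc a c) (snocEquiv A N p)) * v (snocEquiv A N p) := by
        rw [(snocEquiv A N).sum_comp fun w' : Fin (N+1) → A =>
          (∑ c : A, MN subst ν (N+1) (Fin.snoc a c) w') * v w']
  _ = ∑ b : Fin N → A, ∑ cb : A, MN subst ν N a b * v (Fin.snoc b cb) := by
        rw [Fintype.sum_prod_type]
        apply Finset.sum_congr rfl
        intro b _
        apply Finset.sum_congr rfl
        intro cb _
        rw [show snocEquiv A N (b, cb) = Fin.snoc b cb from rfl, key b cb]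
  _ = ∑ b : Fin N → A, MN subst ν N a b * ∑ cb : A, v (Fin.snoc b cb) := by
        apply Finset.sum_congr rfl
        intro b _
        rw [Finset.mul_sum]
  _ = _ := rfl

end five

/-- for a primitive finite collection S of substitutions and a fully
supported probability measure ν on S^ℕ, there is a unique fully supported Borel
probability measure μ_ν on A^ℕ invariant under the random substitution 𝕊_ν, and the
cylinder marginals of the iterates 𝕊_ν^n μ (given by (M_N)^n applied to the marginal
vector of μ) converge to those of μ_ν for every probability measure μ. -/
theorem stmt5 {A S : Type*} [Fintype A] [DecidableEq A] [Inhabited A] [Nonempty A]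
    [MeasurableSpace A] [MeasurableSingletonClass A]
    [Fintype S] [DecidableEq S] [Nonempty S] [MeasurableSpace S]
    [MeasurableSingletonClass S]
    (subst : S → A → List A) (hne : ∀ σ a, subst σ a ≠ [])
    (ν : Measure (ℕ → S)) [IsProbabilityMeasure ν]
    (hfs : ∀ (N : ℕ) (s : Fin N → S), 0 < ν (cylS S s))
    (hprim : PrimitiveSub subst) :
    ∃! μν : Measure (ℕ → A),
      (IsProbabilityMeasure μν ∧
        (∀ (N : ℕ) (a : Fin N → A), 0 < μν (cyl A a)) ∧
        (∀ (N : ℕ) (a : Fin N → A), (μν (cyl A a)).toReal =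
          ∑ s : Fin N → S, ∑ b : Fin N → A,
            if List.ofFn a <+: applySub subst s b then
              (ν (cylS S s)).toReal * (μν (cyl A b)).toReal else 0)) ∧
      (∀ μ : Measure (ℕ → A), IsProbabilityMeasure μ →
        ∀ (N : ℕ) (a : Fin N → A),
          Tendsto (fun n : ℕ =>
              ((MN subst ν N) ^ n).mulVec (fun b => (μ (cyl A b)).toReal) a)
            atTop (nhds ((μν (cyl A a)).toReal))) := by
  classical
  have hQ : ∀ N : ℕ, ColStoch (MN (A := A) subst ν N) := MN_colStoch subst hne ν
  -- positivity of a power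
  have hper : ∀ N : ℕ, ∃ π : (Fin N → A) → ℝ, (∀ a, 0 < π a) ∧ (∑ a, π a = 1) ∧
      (MN subst ν N).mulVec π = π ∧
      (∀ u : (Fin N → A) → ℝ, (∀ b, 0 ≤ u b) → ∑ b, u b = 1 →
        (MN subst ν N).mulVec u = u → u = π) ∧
      (∀ v : (Fin N → A) → ℝ, (∀ b, 0 ≤ v b) → ∑ b, v b = 1 →
        ∀ a, Tendsto (fun n => ((MN subst ν N) ^ n).mulVec v a) atTop (nhds (π a))) := by
    intro N
    obtain ⟨nN, hnN⟩ := hprim N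
    have hpos : ∀ a b : Fin N → A, 0 < ((MN subst ν N) ^ (nN + 1)) a b := by
      intro a b
      obtain ⟨ss, hlen, hchain⟩ := hnN (nN + 1) (by omega) a b
      have := MN_chain_pos subst hne ν hfs ss b
      rwa [hlen, hchain] at this
    exact stoch_perron _ (hQ N) (nN + 1) (by omega) hpos
  choose πv hπpos hπsum hπfix hπuniq hπconv using hper
  -- consistency of the marginals
  have hmarg : ∀ (N : ℕ) (a : Fin N → A), πv N a = ∑ c, πv (N+1) (Fin.snoc a c) := by
    intro N a
    set u : (Fin N → A) → ℝ := fun b => ∑ c, πv (N+1) (Fin.snoc b c) with hu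
    have h1 : ∀ b, 0 ≤ u b := fun b =>
      Finset.sum_nonneg fun c _ => le_of_lt (hπpos (N+1) _)
    have h2 : ∑ b, u b = 1 := by
      rw [← hπsum (N+1), ← (snocEquiv A N).sum_comp (πv (N+1)), Fintype.sum_prod_type]
      rfl
    have h3 : (MN subst ν N).mulVec u = u := by
      funext a'
      have hint := MN_intertwine subst hne ν N (πv (N+1)) a'
      rw [hπfix (N+1)] at hint
      exact hint.symm
    have := hπuniq N u h1 h2 h3
    rw [← this]
  have hp0 : ∀ a : Fin 0 → A, πv 0 a = 1 := by
    intro a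
    have h := hπsum 0
    have h2 : ∑ b : Fin 0 → A, πv 0 b = πv 0 a :=
      Finset.sum_eq_single_of_mem a (Finset.mem_univ a)
        (fun b _ hb => absurd (Subsingleton.elim b a) hb)
    rw [h2] at h
    exact h
  obtain ⟨μν, hμprob, hμcyl⟩ := measure_of_consistent (fun N => πv N)
    (fun N a => le_of_lt (hπpos N a)) hp0 hmarg
  have hμtoReal : ∀ (N : ℕ) (a : Fin N → A), (μν (cyl A a)).toReal = πv N a := by
    intro N a
    rw [hμcyl N a, ENNReal.toReal_ofReal (le_of_lt (hπpos N a))]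
  haveI := hμprob
  refine ⟨μν, ⟨⟨hμprob, ?_, ?_⟩, ?_⟩, ?_⟩
  · -- full support
    intro N a
    rw [hμcyl N a]
    exact ENNReal.ofReal_pos.2 (hπpos N a)
  · -- invariance
    intro N a
    have hsum : ∑ s : Fin N → S, ∑ b : Fin N → A,
        (if List.ofFn a <+: applySub subst s b then
          (ν (cylS S s)).toReal * (μν (cyl A b)).toReal else 0) =
        ∑ s : Fin N → S, ∑ b : Fin N → A,
        (if List.ofFn a <+: applySub subst s b then
          (ν (cylS S s)).toReal * πv N b else 0) := by
      apply Finset.sum_congr rfl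
      intro s _
      apply Finset.sum_congr rfl
      intro b _
      rw [hμtoReal N b]
    rw [hμtoReal N a, hsum, ← mulVec_MN, hπfix N]
  · -- convergence
    intro μ hμp N a
    haveI := hμp
    rw [hμtoReal N a]
    exact hπconv N (fun b => (μ (cyl A b)).toReal) (fun b => ENNReal.toReal_nonneg)
      (sum_meas_cyl_toReal μ N) a
  · -- uniqueness
    rintro y ⟨⟨hyprob, hypos, hyfix⟩, hyconv⟩
    haveI := hyprob
    have hyv : ∀ N : ℕ, (fun b : Fin N → A => (y (cyl A b)).toReal) = πv N := by
      intro N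
      apply hπuniq N _ (fun b => ENNReal.toReal_nonneg) (sum_meas_cyl_toReal y N)
      funext a
      rw [mulVec_MN]
      exact (hyfix N a).symm
    apply ext_of_cyl
    intro N a
    have h1 : (y (cyl A a)).toReal = πv N a := congrFun (hyv N) a
    rw [hμcyl N a, ← h1, ENNReal.ofReal_toReal (measure_ne_top y _)]
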